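/- arXiv:2006.02988 — 4 statements merged into one kernel-verified Lean document; each statement's English description precedes it below -/
import Mathlib

section
/- Let G be a simple connected graph, f a strong rainbow edge coloring of G, and U a set of edges of G that forms a clique in the auxiliary graph H(G). Then f assigns pairwise distinct colors to the edges in U. -/
open SimpleGraph

variable {V : Type*} {C : Type*}

/-- A walk is a shortest path: it is a path whose length equals the distance
between its endpoints. -/
def IsShortestPath (G : SimpleGraph V) {u v : V} (p : G.Walk u v) : Prop :=
  p.IsPath ∧ p.length = G.dist u v

/-- A walk is rainbow w.r.t. an edge coloring `f` if all of its edges receive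
pairwise distinct colors. -/
def IsRainbow {G : SimpleGraph V} (f : Sym2 V → C) {u v : V} (p : G.Walk u v) : Prop :=
  (p.edges.map f).Nodup

/-- An edge `e` separates the vertices `u` and `v` if `e` lies on every
shortest `(u,v)`-path. -/
def EdgeSeparates (G : SimpleGraph V) (e : Sym2 V) (u v : V) : Prop :=
  ∀ p : G.Walk u v, IsShortestPath G p → e ∈ p.edges

/-- A vertex `w` separates the vertices `u` and `v` if `w` is an internal
vertex of every shortest `(u,v)`-path. -/
def VertexSeparates (G : SimpleGraph V) (w u v : V) : Prop :=
  w ≠ u ∧ w ≠ v ∧ ∀ p : G.Walk u v, IsShortestPath G p → w ∈ p.support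

/-- The auxiliary graph `H(G)`: vertices are the edges of `G`, and two edges
are adjacent iff some pair of distinct vertices of `G` is separated by both. -/
def auxGraph (G : SimpleGraph V) : SimpleGraph G.edgeSet where
  Adj e₁ e₂ := e₁ ≠ e₂ ∧
    ∃ u v : V, u ≠ v ∧ EdgeSeparates G e₁.1 u v ∧ EdgeSeparates G e₂.1 u v
  symm := by
    constructor
    rintro e₁ e₂ ⟨hne, u, v, huv, h1, h2⟩
    exact ⟨hne.symm, u, v, huv, h2, h1⟩
  loopless := by constructor; rintro e ⟨hne, -⟩; exact hne rfl

/-- An edge coloring strongly rainbow connects `G` if every pair of distinct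
vertices is joined by a rainbow shortest path. -/
def StronglyRainbowConnects (G : SimpleGraph V) (f : Sym2 V → C) : Prop :=
  ∀ u v : V, u ≠ v → ∃ p : G.Walk u v, IsShortestPath G p ∧ IsRainbow f p

/-- An edge coloring rainbow connects `G` if every pair of distinct vertices
is joined by a rainbow path. -/
def RainbowConnects (G : SimpleGraph V) (f : Sym2 V → C) : Prop :=
  ∀ u v : V, u ≠ v → ∃ p : G.Walk u v, p.IsPath ∧ IsRainbow f p

/-- The strong rainbow connection number of `G`. -/
noncomputable def src (G : SimpleGraph V) : ℕ :=
  sInf {k : ℕ | ∃ f : Sym2 V → Fin k, StronglyRainbowConnects G f}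

/-- The rainbow connection number of `G`. -/
noncomputable def rc (G : SimpleGraph V) : ℕ :=
  sInf {k : ℕ | ∃ f : Sym2 V → Fin k, RainbowConnects G f}

/-- If `f` is a strong rainbow coloring of `G` and `U` is a clique in the
auxiliary graph `H(G)`, then `f` assigns pairwise distinct colors to `U`. -/
theorem stmt3 {V C : Type*} (G : SimpleGraph V) (hG : G.Connected)
    (f : Sym2 V → C) (hf : StronglyRainbowConnects G f)
    (U : Set G.edgeSet) (hU : (auxGraph G).IsClique U) :
    ∀ e₁ ∈ U, ∀ e₂ ∈ U, e₁ ≠ e₂ → f e₁.1 ≠ f e₂.1 := by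
  intro e₁ h₁ e₂ h₂ hne heq
  obtain ⟨-, u, v, huv, hs1, hs2⟩ := hU h₁ h₂ hne
  obtain ⟨p, hp, hr⟩ := hf u v huv
  have m1 := hs1 p hp
  have m2 := hs2 p hp
  exact hne (Subtype.ext (List.inj_on_of_nodup_map hr m1 m2 heq))
end

section
/- For every natural number k, there exists a graph G' with ω(H(G')) − diam(G') = k; concretely, G' = K_{1,k+2} satisfies ω(H(G')) = k+2 and diam(G') = 2. -/
open SimpleGraph

variable {V : Type*} {C : Type*}

abbrev SG (k : ℕ) := completeBipartiteGraph (Fin 1) (Fin (k + 2))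

lemma adj_center {k : ℕ} (j : Fin (k+2)) : (SG k).Adj (Sum.inl 0) (Sum.inr j) := by
  simp

lemma edge_form {k : ℕ} (e : Sym2 (Fin 1 ⊕ Fin (k+2))) (he : e ∈ (SG k).edgeSet) :
    ∃ j, e = s(Sum.inl 0, Sum.inr j) := by
  induction e using Sym2.ind with
  | _ x y =>
    rw [mem_edgeSet] at he
    rcases x with a | i <;> rcases y with b | j <;> simp at he
    · exact ⟨j, by rw [Subsingleton.elim a 0]⟩
    · exact ⟨i, by rw [Subsingleton.elim b 0, Sym2.eq_swap]⟩

lemma dist_leaves {k : ℕ} {i j : Fin (k+2)} (hij : i ≠ j) :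
    (SG k).dist (Sum.inr i) (Sum.inr j) = 2 := by
  have w : (SG k).Walk (Sum.inr i) (Sum.inr j) :=
    Walk.cons (adj_center i).symm (Walk.cons (adj_center j) Walk.nil)
  have h2 : (SG k).dist (Sum.inr i) (Sum.inr j) ≤ 2 := by
    simpa using dist_le (Walk.cons (adj_center i).symm (Walk.cons (adj_center j) Walk.nil))
  have h0 : (SG k).dist (Sum.inr i) (Sum.inr j) ≠ 0 := by
    rw [Ne, dist_eq_zero_iff_eq_or_not_reachable]
    push_neg
    exact ⟨by simp [hij], ⟨w⟩⟩
  have h1 : (SG k).dist (Sum.inr i) (Sum.inr j) ≠ 1 := by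
    rw [Ne, dist_eq_one_iff_adj]; simp
  omega

lemma shortest_edges {k : ℕ} {i j : Fin (k+2)} (hij : i ≠ j)
    (p : (SG k).Walk (Sum.inr i) (Sum.inr j)) (hp : IsShortestPath (SG k) p) :
    p.edges = [s(Sum.inr i, Sum.inl 0), s(Sum.inl 0, Sum.inr j)] := by
  have hlen : p.length = 2 := hp.2.trans (dist_leaves hij)
  cases p with
  | nil => simp at hlen
  | cons h q =>
    rename_i w
    cases q with
    | nil => simp at hlen
    | cons h' q' =>
      cases q' with
      | cons h'' q'' => simp [Walk.length_cons] at hlen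
      | nil =>
        have hw : w = Sum.inl 0 := by
          rcases w with a | m
          · rw [Subsingleton.elim a 0]
          · simp at h
        subst hw
        simp

lemma edge_separates {k : ℕ} {i j : Fin (k+2)} (hij : i ≠ j) :
    EdgeSeparates (SG k) s(Sum.inl 0, Sum.inr i) (Sum.inr i) (Sum.inr j) ∧
    EdgeSeparates (SG k) s(Sum.inl 0, Sum.inr j) (Sum.inr i) (Sum.inr j) := by
  constructor <;> intro p hp <;> rw [shortest_edges hij p hp] <;>
    simp [Sym2.eq_swap]

lemma aux_adj {k : ℕ} (e₁ e₂ : (SG k).edgeSet) (hne : e₁ ≠ e₂) :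
    (auxGraph (SG k)).Adj e₁ e₂ := by
  obtain ⟨i, hi⟩ := edge_form e₁.1 e₁.2
  obtain ⟨j, hj⟩ := edge_form e₂.1 e₂.2
  have hij : i ≠ j := by
    rintro rfl; exact hne (Subtype.ext (hi.trans hj.symm))
  refine ⟨hne, Sum.inr i, Sum.inr j, by simp [hij], ?_, ?_⟩
  · rw [hi]; exact (edge_separates hij).1
  · rw [hj]; exact (edge_separates hij).2

lemma card_edgeSet (k : ℕ) [Fintype (SG k).edgeSet] :
    Fintype.card (SG k).edgeSet = k + 2 := by
  have hb : Function.Bijective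
      (fun j : Fin (k+2) => (⟨s(Sum.inl 0, Sum.inr j), by simp⟩ : (SG k).edgeSet)) := by
    constructor
    · intro a b hab
      simpa [Subtype.ext_iff, Sym2.congr_right] using hab
    · rintro ⟨e, he⟩
      obtain ⟨j, rfl⟩ := edge_form e he
      exact ⟨j, rfl⟩
  rw [← Fintype.card_of_bijective hb, Fintype.card_fin]

lemma clique_num_eq (k : ℕ) : (auxGraph (SG k)).cliqueNum = k + 2 := by
  haveI : Fintype (SG k).edgeSet := Fintype.ofFinite _
  apply le_antisymm
  · refine csSup_le ⟨0, ∅, isNClique_empty.mpr rfl⟩ ?_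
    rintro n ⟨s, hs⟩
    exact hs.2 ▸ (Finset.card_le_univ s).trans (card_edgeSet k).le
  · have hcl : (auxGraph (SG k)).IsClique (Finset.univ : Finset (SG k).edgeSet) :=
      fun a _ b _ hab => aux_adj a b hab
    have := IsClique.card_le_cliqueNum (tc := hcl)
    rwa [Finset.card_univ, card_edgeSet k] at this

lemma diam_eq (k : ℕ) : (SG k).diam = 2 := by
  have hw0 : (SG k).Walk (Sum.inr (0 : Fin (k+2))) (Sum.inr 1) :=
    Walk.cons (adj_center 0).symm (Walk.cons (adj_center 1) Walk.nil)
  have hedist2 : (SG k).edist (Sum.inr (0 : Fin (k+2))) (Sum.inr 1) = 2 := by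
    have h2 : (SG k).edist (Sum.inr (0 : Fin (k+2))) (Sum.inr 1) ≤ 2 := by
      simpa using edist_le (Walk.cons (adj_center (0 : Fin (k+2))).symm
        (Walk.cons (adj_center 1) Walk.nil))
    have h0 : (SG k).edist (Sum.inr (0 : Fin (k+2))) (Sum.inr 1) ≠ 0 := by
      rw [Ne, edist_eq_zero_iff]; simp
    have h1 : (SG k).edist (Sum.inr (0 : Fin (k+2))) (Sum.inr 1) ≠ 1 := by
      rw [Ne, edist_eq_one_iff_adj]; simp
    refine le_antisymm h2 ?_
    have : 1 < (SG k).edist (Sum.inr (0 : Fin (k+2))) (Sum.inr 1) :=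
      lt_of_le_of_ne (ENat.one_le_iff_ne_zero.mpr h0) (Ne.symm h1)
    exact Order.add_one_le_of_lt this
  have hediam : (SG k).ediam = 2 := by
    refine le_antisymm (ediam_le_of_edist_le fun u v => ?_) (hedist2 ▸ edist_le_ediam)
    rcases u with a | i <;> rcases v with b | j
    · rw [Subsingleton.elim a b]; simp [SimpleGraph.edist_self]
    · rw [Subsingleton.elim a 0]
      calc (SG k).edist (Sum.inl 0) (Sum.inr j)
          ≤ (Walk.cons (adj_center j) Walk.nil).length := edist_le _
        _ ≤ 2 := by simp
    · rw [Subsingleton.elim b 0]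
      calc (SG k).edist (Sum.inr i) (Sum.inl 0)
          ≤ (Walk.cons (adj_center i).symm Walk.nil).length := edist_le _
        _ ≤ 2 := by simp
    · rcases eq_or_ne i j with rfl | hij
      · simp [SimpleGraph.edist_self]
      · calc (SG k).edist (Sum.inr i) (Sum.inr j)
            ≤ (Walk.cons (adj_center i).symm
                (Walk.cons (adj_center j) Walk.nil)).length := edist_le _
          _ ≤ 2 := by simp
  rw [SimpleGraph.diam, hediam]
  rfl

/-- For every `k` there is a graph with `ω(H(G')) − diam(G') = k`; concretely,
`G' = K_{1,k+2}` has `ω(H(G')) = k+2` and `diam(G') = 2`. -/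
theorem stmt7 (k : ℕ) :
    (auxGraph (completeBipartiteGraph (Fin 1) (Fin (k + 2)))).cliqueNum = k + 2 ∧
    (completeBipartiteGraph (Fin 1) (Fin (k + 2))).diam = 2 ∧
    ∃ (W : Type) (G' : SimpleGraph W),
      (auxGraph G').cliqueNum - G'.diam = k := by
  refine ⟨clique_num_eq k, diam_eq k,
    Fin 1 ⊕ Fin (k + 2), completeBipartiteGraph (Fin 1) (Fin (k + 2)), ?_⟩
  rw [show completeBipartiteGraph (Fin 1) (Fin (k + 2)) = SG k from rfl,
    clique_num_eq k, diam_eq k]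
  omega
end

section
/- For every natural number k there exists a graph G with src(G) − max(diam(G), ω(H(G))) ≥ k; concretely, G = K_{2,(k+2)^2} satisfies diam(G) = 2, ω(H(G)) = 1, and src(G) = k+2. -/
open SimpleGraph

variable {V : Type*} {C : Type*}

lemma edist_eq_two' {V} {G : SimpleGraph V} {u v : V} (hle : G.edist u v ≤ 2)
    (h0 : u ≠ v) (h1 : ¬ G.Adj u v) : G.edist u v = 2 := by
  have hne : G.edist u v ≠ ⊤ := fun h => by simp [h] at hle
  lift G.edist u v to ℕ using hne with d hd
  have hd0 : d ≠ 0 := by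
    intro h; subst h; exact h0 (edist_eq_zero_iff.mp hd.symm)
  have hd1 : d ≠ 1 := by
    intro h; subst h; exact h1 (edist_eq_one_iff_adj.mp hd.symm)
  have h2 : d ≤ 2 := by exact_mod_cast hle
  have : d = 2 := by omega
  exact_mod_cast congrArg (Nat.cast : ℕ → ℕ∞) this

abbrev BG (m : ℕ) : SimpleGraph (Fin 2 ⊕ Fin m) := completeBipartiteGraph (Fin 2) (Fin m)

/-- two-step walk -/
def w2 {V} {G : SimpleGraph V} {u w v : V} (h1 : G.Adj u w) (h2 : G.Adj w v) : G.Walk u v :=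
  .cons h1 (.cons h2 .nil)

@[simp] lemma w2_length {V} {G : SimpleGraph V} {u w v : V} (h1 : G.Adj u w) (h2 : G.Adj w v) :
    (w2 h1 h2).length = 2 := rfl

@[simp] lemma w2_edges {V} {G : SimpleGraph V} {u w v : V} (h1 : G.Adj u w) (h2 : G.Adj w v) :
    (w2 h1 h2).edges = [s(u, w), s(w, v)] := rfl

lemma w2_isPath {V} {G : SimpleGraph V} {u w v : V} (h1 : G.Adj u w) (h2 : G.Adj w v)
    (huv : u ≠ v) : (w2 h1 h2).IsPath := by
  simp [w2, SimpleGraph.Walk.cons_isPath_iff, h1.ne, h2.ne, huv, h1.ne']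

lemma BG_adj_lr {m : ℕ} (a : Fin 2) (b : Fin m) : (BG m).Adj (.inl a) (.inr b) := by simp
lemma BG_adj_rl {m : ℕ} (a : Fin 2) (b : Fin m) : (BG m).Adj (.inr b) (.inl a) := by simp
lemma BG_not_adj_rr {m : ℕ} (a b : Fin m) : ¬ (BG m).Adj (.inr a) (.inr b) := by simp
lemma BG_not_adj_ll {m : ℕ} (a b : Fin 2) : ¬ (BG m).Adj (.inl a) (.inl b) := by simp

lemma BG_edist_rr {m : ℕ} {a b : Fin m} (hab : a ≠ b) :
    (BG m).edist (.inr a) (.inr b) = 2 := by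
  apply edist_eq_two'
  · calc (BG m).edist _ _ ≤ (w2 (BG_adj_rl 0 a) (BG_adj_lr 0 b)).length := edist_le _
    _ = 2 := by simp
  · simp [hab]
  · simp

lemma BG_edist_ll {m : ℕ} [NeZero m] {a b : Fin 2} (hab : a ≠ b) :
    (BG m).edist (.inl a) (.inl b) = 2 := by
  apply edist_eq_two'
  · calc (BG m).edist _ _ ≤ (w2 (BG_adj_lr a 0) (BG_adj_rl b 0)).length := edist_le _
    _ = 2 := by simp
  · simp [hab]
  · simp

lemma BG_dist_rr {m : ℕ} {a b : Fin m} (hab : a ≠ b) :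
    (BG m).dist (.inr a) (.inr b) = 2 := by
  rw [SimpleGraph.dist, BG_edist_rr hab]; rfl

lemma BG_dist_ll {m : ℕ} [NeZero m] {a b : Fin 2} (hab : a ≠ b) :
    (BG m).dist (.inl a) (.inl b) = 2 := by
  rw [SimpleGraph.dist, BG_edist_ll hab]; rfl

lemma BG_dist_lr {m : ℕ} (a : Fin 2) (b : Fin m) : (BG m).dist (.inl a) (.inr b) = 1 :=
  dist_eq_one_iff_adj.mpr (BG_adj_lr a b)

lemma BG_dist_rl {m : ℕ} (a : Fin 2) (b : Fin m) : (BG m).dist (.inr b) (.inl a) = 1 :=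
  dist_eq_one_iff_adj.mpr (BG_adj_rl a b)
lemma walk_len_one {V} {G : SimpleGraph V} {u v : V} (p : G.Walk u v) (h : p.length = 1) :
    ∃ h' : G.Adj u v, p = SimpleGraph.Walk.cons h' SimpleGraph.Walk.nil := by
  cases p with
  | nil => simp at h
  | cons h1 q =>
    cases q with
    | nil => exact ⟨h1, rfl⟩
    | cons h2 r => simp [SimpleGraph.Walk.length_cons] at h

lemma walk_len_two {V} {G : SimpleGraph V} {u v : V} (p : G.Walk u v) (h : p.length = 2) :
    ∃ (w : V) (h1 : G.Adj u w) (h2 : G.Adj w v), p = w2 h1 h2 := by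
  cases p with
  | nil => simp at h
  | cons h1 q =>
    cases q with
    | nil => simp at h
    | cons h2 r =>
      cases r with
      | nil => exact ⟨_, h1, h2, rfl⟩
      | cons h3 s => simp [SimpleGraph.Walk.length_cons] at h

/-- every shortest path between two distinct right vertices is `w2` through a left vertex -/
lemma BG_shortest_rr {m : ℕ} {a b : Fin m} (hab : a ≠ b)
    (p : (BG m).Walk (.inr a) (.inr b)) (hp : IsShortestPath (BG m) p) :
    ∃ (L : Fin 2), p.edges = [s(Sum.inr a, Sum.inl L), s(Sum.inl L, Sum.inr b)] := by
  have hl : p.length = 2 := by rw [hp.2, BG_dist_rr hab]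
  obtain ⟨w, h1, h2, rfl⟩ := walk_len_two p hl
  cases w with
  | inl L => exact ⟨L, by simp⟩
  | inr c => exact absurd h1 (BG_not_adj_rr a c)

lemma BG_shortest_ll {m : ℕ} [NeZero m] {a b : Fin 2} (hab : a ≠ b)
    (p : (BG m).Walk (.inl a) (.inl b)) (hp : IsShortestPath (BG m) p) :
    ∃ (c : Fin m), p.edges = [s(Sum.inl a, Sum.inr c), s(Sum.inr c, Sum.inl b)] := by
  have hl : p.length = 2 := by rw [hp.2, BG_dist_ll hab]
  obtain ⟨w, h1, h2, rfl⟩ := walk_len_two p hl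
  cases w with
  | inl c => exact absurd h1 (BG_not_adj_ll a c)
  | inr c => exact ⟨c, by simp⟩

lemma BG_shortest_lr {m : ℕ} {a : Fin 2} {b : Fin m}
    (p : (BG m).Walk (.inl a) (.inr b)) (hp : IsShortestPath (BG m) p) :
    p.edges = [s(Sum.inl a, Sum.inr b)] := by
  have hl : p.length = 1 := by rw [hp.2, BG_dist_lr a b]
  obtain ⟨h', rfl⟩ := walk_len_one p hl
  simp

lemma BG_shortest_rl {m : ℕ} {a : Fin 2} {b : Fin m}
    (p : (BG m).Walk (.inr b) (.inl a)) (hp : IsShortestPath (BG m) p) :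
    p.edges = [s(Sum.inr b, Sum.inl a)] := by
  have hl : p.length = 1 := by rw [hp.2, BG_dist_rl a b]
  obtain ⟨h', rfl⟩ := walk_len_one p hl
  simp

/-- `w2` through distinct endpoints is a shortest path (right-right case) -/
lemma BG_w2_shortest_rr {m : ℕ} {a b : Fin m} (hab : a ≠ b) (L : Fin 2) :
    IsShortestPath (BG m) (w2 (BG_adj_rl L a) (BG_adj_lr L b)) :=
  ⟨w2_isPath _ _ (by simp [hab]), by rw [w2_length, BG_dist_rr hab]⟩

lemma BG_w2_shortest_ll {m : ℕ} [NeZero m] {a b : Fin 2} (hab : a ≠ b) (c : Fin m) :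
    IsShortestPath (BG m) (w2 (BG_adj_lr a c) (BG_adj_rl b c)) :=
  ⟨w2_isPath _ _ (by simp [hab]), by rw [w2_length, BG_dist_ll hab]⟩

lemma BG_edge_shortest_lr {m : ℕ} (a : Fin 2) (b : Fin m) :
    IsShortestPath (BG m) (SimpleGraph.Walk.cons (BG_adj_lr a b) SimpleGraph.Walk.nil) :=
  ⟨by simp, by rw [SimpleGraph.Walk.length_cons, SimpleGraph.Walk.length_nil, BG_dist_lr]⟩

lemma BG_edge_shortest_rl {m : ℕ} (a : Fin 2) (b : Fin m) :
    IsShortestPath (BG m) (SimpleGraph.Walk.cons (BG_adj_rl a b) SimpleGraph.Walk.nil) :=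
  ⟨by simp, by rw [SimpleGraph.Walk.length_cons, SimpleGraph.Walk.length_nil, BG_dist_rl]⟩
lemma BG_aux_edgeless {m : ℕ} (hm : 2 ≤ m) :
    ∀ e₁ e₂, ¬ (auxGraph (BG m)).Adj e₁ e₂ := by
  haveI : NeZero m := ⟨by omega⟩
  have h01m : (0 : Fin m) ≠ (1 : Fin m) := by
    intro h
    have := congrArg Fin.val h
    simp [Fin.val_one', Nat.mod_eq_of_lt hm] at this
  rintro ⟨e₁, he₁⟩ ⟨e₂, he₂⟩ ⟨hne, u, v, huv, hs1, hs2⟩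
  have key : e₁ = e₂ := by
    cases u with
    | inl a =>
      cases v with
      | inl b =>
        have hab : a ≠ b := by simpa using huv
        have m1 := hs1 _ (BG_w2_shortest_ll (c := (0 : Fin m)) hab)
        have m2 := hs1 _ (BG_w2_shortest_ll (c := (1 : Fin m)) hab)
        have n1 := hs2 _ (BG_w2_shortest_ll (c := (0 : Fin m)) hab)
        have n2 := hs2 _ (BG_w2_shortest_ll (c := (1 : Fin m)) hab)
        simp only [w2_edges, List.mem_cons, List.mem_singleton, List.not_mem_nil, or_false] at m1 m2 n1 n2
        exfalso
        rcases m1 with h | h <;> rcases m2 with h' | h' <;>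
          (subst h; rw [Sym2.eq_iff] at h') <;> simp_all
      | inr b =>
        have m1 := hs1 _ (BG_edge_shortest_lr a b)
        have n1 := hs2 _ (BG_edge_shortest_lr a b)
        simp at m1 n1
        rw [m1, n1]
    | inr a =>
      cases v with
      | inl b =>
        have m1 := hs1 _ (BG_edge_shortest_rl b a)
        have n1 := hs2 _ (BG_edge_shortest_rl b a)
        simp at m1 n1
        rw [m1, n1]
      | inr b =>
        have hab : a ≠ b := by simpa using huv
        have m1 := hs1 _ (BG_w2_shortest_rr hab 0)
        have m2 := hs1 _ (BG_w2_shortest_rr hab 1)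
        simp only [w2_edges, List.mem_cons, List.mem_singleton, List.not_mem_nil, or_false] at m1 m2
        exfalso
        rcases m1 with h | h <;> rcases m2 with h' | h' <;>
          (subst h; rw [Sym2.eq_iff] at h') <;> simp_all
  exact hne (Subtype.ext key)
lemma BG_cliqueNum {m : ℕ} (hm : 2 ≤ m) : (auxGraph (BG m)).cliqueNum = 1 := by
  haveI : NeZero m := ⟨by omega⟩
  have hedge : s(Sum.inl (0 : Fin 2), Sum.inr (0 : Fin m)) ∈ (BG m).edgeSet := by simp
  have hset : {n | ∃ s, (auxGraph (BG m)).IsNClique n s} = {0, 1} := by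
    ext n
    constructor
    · rintro ⟨s, hs, hcard⟩
      have : s.card ≤ 1 := by
        rw [Finset.card_le_one]
        intro a ha b hb
        by_contra hab
        exact BG_aux_edgeless hm a b (hs ha hb hab)
      have hn : n ≤ 1 := hcard ▸ this
      interval_cases n <;> simp
    · rintro (rfl | rfl)
      · exact ⟨∅, SimpleGraph.isNClique_empty.mpr rfl⟩
      · exact ⟨{⟨_, hedge⟩}, by simp [SimpleGraph.isNClique_singleton]⟩
  rw [SimpleGraph.cliqueNum, hset]
  rw [csSup_pair]
  simp
lemma BG_ediam {m : ℕ} (hm : 2 ≤ m) : (BG m).ediam = 2 := by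
  haveI : NeZero m := ⟨by omega⟩
  have h01m : (0 : Fin m) ≠ (1 : Fin m) := by
    intro h
    have := congrArg Fin.val h
    simp [Fin.val_one', Nat.mod_eq_of_lt hm] at this
  apply le_antisymm
  · apply SimpleGraph.ediam_le_of_edist_le
    intro u v
    cases u with
    | inl a =>
      cases v with
      | inl b =>
        rcases eq_or_ne a b with rfl | hab
        · simp [SimpleGraph.edist_self]
        · exact le_of_eq (BG_edist_ll hab)
      | inr b =>
        calc (BG m).edist _ _ ≤ 1 := SimpleGraph.edist_eq_one_iff_adj.mpr (BG_adj_lr a b) ▸ le_rfl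
          _ ≤ 2 := by norm_num
    | inr a =>
      cases v with
      | inl b =>
        calc (BG m).edist _ _ ≤ 1 := SimpleGraph.edist_eq_one_iff_adj.mpr (BG_adj_rl b a) ▸ le_rfl
          _ ≤ 2 := by norm_num
      | inr b =>
        rcases eq_or_ne a b with rfl | hab
        · simp [SimpleGraph.edist_self]
        · exact le_of_eq (BG_edist_rr hab)
  · calc (2 : ℕ∞) = (BG m).edist (.inr 0) (.inr 1) := (BG_edist_rr h01m).symm
      _ ≤ (BG m).ediam := SimpleGraph.edist_le_ediam

lemma BG_diam {m : ℕ} (hm : 2 ≤ m) : (BG m).diam = 2 := by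
  rw [SimpleGraph.diam, BG_ediam hm]; rfl
private lemma div_lt (k : ℕ) (v : Fin ((k+2)^2)) : v.val / (k+2) < k+2 := by
  have := v.isLt
  rw [Nat.div_lt_iff_lt_mul (by omega)]
  nlinarith [v.isLt]

def colFun (k : ℕ) : (Fin 2 ⊕ Fin ((k+2)^2)) → (Fin 2 ⊕ Fin ((k+2)^2)) → Fin (k+2)
  | .inl i, .inr v => if i = 0 then ⟨v.val / (k+2), div_lt k v⟩ else ⟨v.val % (k+2), Nat.mod_lt _ (by omega)⟩
  | .inr v, .inl i => if i = 0 then ⟨v.val / (k+2), div_lt k v⟩ else ⟨v.val % (k+2), Nat.mod_lt _ (by omega)⟩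
  | _, _ => ⟨0, by omega⟩

lemma colFun_symm (k : ℕ) (x y : Fin 2 ⊕ Fin ((k+2)^2)) : colFun k x y = colFun k y x := by
  rcases x with a | a <;> rcases y with b | b <;> rfl

noncomputable def col (k : ℕ) : Sym2 (Fin 2 ⊕ Fin ((k+2)^2)) → Fin (k+2) :=
  Sym2.lift ⟨fun x y => colFun k x y, colFun_symm k⟩

@[simp] lemma col_mk (k : ℕ) (x y : Fin 2 ⊕ Fin ((k+2)^2)) : col k s(x, y) = colFun k x y := rfl

lemma col_connects (k : ℕ) : StronglyRainbowConnects (BG ((k+2)^2)) (col k) := by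
  have hsq : 2 ≤ (k+2)^2 := le_trans (by omega) (Nat.le_self_pow (by omega) _)
  haveI : NeZero ((k+2)^2) := ⟨by omega⟩
  intro u v huv
  cases u with
  | inl a =>
    cases v with
    | inl b =>
      have hab : a ≠ b := by simpa using huv
      refine ⟨w2 (BG_adj_lr a 1) (BG_adj_rl b 1), BG_w2_shortest_ll hab 1, ?_⟩
      unfold IsRainbow
      have h1 : ((1 : Fin ((k+2)^2)) : ℕ) = 1 := by
        simp [Fin.val_one', Nat.mod_eq_of_lt hsq]
      have hab' : a = 0 ∧ b = 1 ∨ a = 1 ∧ b = 0 := by fin_cases a <;> fin_cases b <;> simp_all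
      have hd : (1 : ℕ) / (k+2) = 0 := Nat.div_eq_of_lt (by omega)
      have hm' : (1 : ℕ) % (k+2) = 1 := Nat.mod_eq_of_lt (by omega)
      rcases hab' with ⟨rfl, rfl⟩ | ⟨rfl, rfl⟩ <;>
      · simp only [w2_edges, List.map_cons, List.map_nil, col_mk, List.nodup_cons,
          List.mem_singleton, List.mem_nil_iff, not_false_iff, List.nodup_nil, and_true]
        simp [colFun, h1, hd, hm', Fin.ext_iff, Nat.mod_eq_of_lt hsq]
    | inr b =>
      exact ⟨_, BG_edge_shortest_lr a b, by simp [IsRainbow]⟩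
  | inr a =>
    cases v with
    | inl b =>
      exact ⟨_, BG_edge_shortest_rl b a, by simp [IsRainbow]⟩
    | inr b =>
      have hab : a ≠ b := by simpa using huv
      rcases eq_or_ne (a.val / (k+2)) (b.val / (k+2)) with hdiv | hdiv
      · -- divs equal, mods must differ
        have hmod : a.val % (k+2) ≠ b.val % (k+2) := by
          intro h
          apply hab
          apply Fin.ext
          rw [← Nat.div_add_mod a.val (k+2), ← Nat.div_add_mod b.val (k+2), hdiv, h]
        refine ⟨w2 (BG_adj_rl 1 a) (BG_adj_lr 1 b), BG_w2_shortest_rr hab 1, ?_⟩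
        unfold IsRainbow
        simp only [w2_edges, List.map_cons, List.map_nil, col_mk, List.nodup_cons,
          List.mem_singleton, List.mem_nil_iff, not_false_iff, List.nodup_nil, and_true]
        simp [colFun, Fin.ext_iff, hmod]
      · refine ⟨w2 (BG_adj_rl 0 a) (BG_adj_lr 0 b), BG_w2_shortest_rr hab 0, ?_⟩
        unfold IsRainbow
        simp only [w2_edges, List.map_cons, List.map_nil, col_mk, List.nodup_cons,
          List.mem_singleton, List.mem_nil_iff, not_false_iff, List.nodup_nil, and_true]
        simp [colFun, Fin.ext_iff, hdiv]
lemma BG_src_lower (k c : ℕ) (f : Sym2 (Fin 2 ⊕ Fin ((k+2)^2)) → Fin c)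
    (hf : StronglyRainbowConnects (BG ((k+2)^2)) f) : k + 2 ≤ c := by
  set g : Fin ((k+2)^2) → Fin c × Fin c :=
    fun v => (f s(.inl 0, .inr v), f s(.inl 1, .inr v)) with hgdef
  have hg : Function.Injective g := by
    intro a b hab
    by_contra hne
    obtain ⟨p, hp, hr⟩ := hf (.inr a) (.inr b) (by simp [hne])
    obtain ⟨L, hedges⟩ := BG_shortest_rr hne p hp
    have hr' : (([s(Sum.inr a, Sum.inl L), s(Sum.inl L, Sum.inr b)]).map f).Nodup :=
      hedges ▸ hr
    simp only [List.map_cons, List.map_nil, List.nodup_cons, List.mem_singleton,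
      List.not_mem_nil, not_false_iff, List.nodup_nil, and_true] at hr'
    have h0 : f s(Sum.inl 0, Sum.inr a) = f s(Sum.inl 0, Sum.inr b) := congrArg Prod.fst hab
    have h1 : f s(Sum.inl 1, Sum.inr a) = f s(Sum.inl 1, Sum.inr b) := congrArg Prod.snd hab
    have hL : L = 0 ∨ L = 1 := by fin_cases L <;> simp
    rcases hL with rfl | rfl
    · exact hr' (by rw [show s(Sum.inr a, Sum.inl (0:Fin 2)) = s(Sum.inl (0:Fin 2), Sum.inr a)
        from Sym2.eq_swap, h0])
    · exact hr' (by rw [show s(Sum.inr a, Sum.inl (1:Fin 2)) = s(Sum.inl (1:Fin 2), Sum.inr a)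
        from Sym2.eq_swap, h1])
  have hcard := Fintype.card_le_of_injective g hg
  simp only [Fintype.card_fin, Fintype.card_prod] at hcard
  by_contra h
  push_neg at h
  nlinarith

lemma BG_src (k : ℕ) : src (BG ((k+2)^2)) = k + 2 := by
  have hmem : (k+2) ∈ {c : ℕ | ∃ f : Sym2 (Fin 2 ⊕ Fin ((k+2)^2)) → Fin c,
      StronglyRainbowConnects (BG ((k+2)^2)) f} := ⟨col k, col_connects k⟩
  apply le_antisymm
  · exact Nat.sInf_le hmem
  · obtain ⟨f, hf⟩ := Nat.sInf_mem (⟨_, hmem⟩ : Set.Nonempty _)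
    exact BG_src_lower k _ f hf
/-- For every `k`, the graph `G = K_{2,(k+2)²}` satisfies `diam(G) = 2`,
`ω(H(G)) = 1`, `src(G) = k+2`, hence `src(G) − max(diam(G), ω(H(G))) ≥ k`. -/
theorem stmt11 (k : ℕ) :
    (completeBipartiteGraph (Fin 2) (Fin ((k + 2) ^ 2))).diam = 2 ∧
    (auxGraph (completeBipartiteGraph (Fin 2) (Fin ((k + 2) ^ 2)))).cliqueNum = 1 ∧
    src (completeBipartiteGraph (Fin 2) (Fin ((k + 2) ^ 2))) = k + 2 ∧
    k ≤ src (completeBipartiteGraph (Fin 2) (Fin ((k + 2) ^ 2))) -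
      max (completeBipartiteGraph (Fin 2) (Fin ((k + 2) ^ 2))).diam
        (auxGraph (completeBipartiteGraph (Fin 2) (Fin ((k + 2) ^ 2)))).cliqueNum := by
  have hm : 2 ≤ (k+2)^2 := le_trans (by omega) (Nat.le_self_pow (by omega) _)
  have h1 := BG_diam hm
  have h2 := BG_cliqueNum hm
  have h3 := BG_src k
  refine ⟨h1, h2, h3, ?_⟩
  rw [h1, h2, h3]
  omega
end

section
/- Let G be a simple connected graph whose auxiliary graph H(G) contains a clique of size c, i.e., c edges of G that pairwise separate common vertex pairs. Then for any set K of colors with |K| < c, there is no edge coloring f: E(G) → K that strongly rainbow connects G. -/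
open SimpleGraph

variable {V : Type*} {C : Type*}

/-- If the auxiliary graph `H(G)` contains a clique of size `c`, then no edge
coloring with fewer than `c` colors strongly rainbow connects `G`. -/
theorem stmt18 {V : Type*} (G : SimpleGraph V) (hG : G.Connected)
    (c : ℕ) (U : Finset G.edgeSet) (hcard : U.card = c)
    (hclique : (auxGraph G).IsClique (U : Set G.edgeSet))
    (K : Type*) [Fintype K] (hK : Fintype.card K < c) :
    ∀ f : Sym2 V → K, ¬ StronglyRainbowConnects G f := by
  intro f hf
  have hinj : Set.InjOn (fun e : G.edgeSet => f e.1) (U : Set G.edgeSet) := by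
    intro e₁ h₁ e₂ h₂ hfe
    by_contra hne
    obtain ⟨-, u, v, huv, hs₁, hs₂⟩ := hclique h₁ h₂ hne
    obtain ⟨p, hp, hr⟩ := hf u v huv
    have hm₁ : e₁.1 ∈ p.edges := hs₁ p hp
    have hm₂ : e₂.1 ∈ p.edges := hs₂ p hp
    have := List.inj_on_of_nodup_map hr hm₁ hm₂ hfe
    exact hne (Subtype.ext this)
  have hle : U.card ≤ Fintype.card K := by
    have := Finset.card_le_card_of_injOn (fun e : G.edgeSet => f e.1)
      (fun _ _ => Finset.mem_univ _) hinj
    simpa [Finset.card_univ] using this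
  omega
end
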